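/- Fix nonempty finite sets Ω and A, a finite message set M with |M| > max{|Ω|, |A|}, and an interior prior μ₀ on Ω. Suppose the environment (u_S, u_R) satisfies scant-indifferences. If (σ, ρ) is a cheap-talk equilibrium such that U_S(σ, ρ) equals the persuasion payoff and ρ is pure-on-path, then there exist a partitional messaging strategy σ̂ and a pure action strategy ρ̂ such that at most |A| messages are sent with positive probability under σ̂, (σ̂, ρ̂) is a cheap-talk equilibrium, and U_S(σ̂, ρ̂) equals the persuasion payoff. -/

import Mathlib

open MeasureTheory

namespace KL

/-- `f` is a probability distribution on the finite type `X`. -/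
def IsDist {X : Type} [Fintype X] (f : X → ℝ) : Prop :=
  (∀ x, 0 ≤ f x) ∧ ∑ x, f x = 1

/-- `μ₀` is an interior prior on `Ω`. -/
def IsPrior {Ω : Type} [Fintype Ω] (μ₀ : Ω → ℝ) : Prop :=
  (∀ ω, 0 < μ₀ ω) ∧ ∑ ω, μ₀ ω = 1

variable {Ω A M : Type} [Fintype Ω] [Fintype A] [Fintype M]

/-- A messaging strategy: a distribution over messages in each state. -/
def IsMsg (σ : Ω → M → ℝ) : Prop := ∀ ω, IsDist (σ ω)

/-- An action strategy: a distribution over actions after each message. -/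
def IsAct (ρ : M → A → ℝ) : Prop := ∀ m, IsDist (ρ m)

/-- Expected payoff of a profile `(σ, ρ)` for utility `u`. -/
def U (μ₀ : Ω → ℝ) (u : A × Ω → ℝ) (σ : Ω → M → ℝ) (ρ : M → A → ℝ) : ℝ :=
  ∑ ω, ∑ m, ∑ a, μ₀ ω * σ ω m * ρ m a * u (a, ω)

/-- Sender best response. -/
def SBR (μ₀ : Ω → ℝ) (uS : A × Ω → ℝ) (σ : Ω → M → ℝ) (ρ : M → A → ℝ) : Prop :=
  ∀ σ' : Ω → M → ℝ, IsMsg σ' → U μ₀ uS σ' ρ ≤ U μ₀ uS σ ρ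

/-- Receiver best response. -/
def RBR (μ₀ : Ω → ℝ) (uR : A × Ω → ℝ) (σ : Ω → M → ℝ) (ρ : M → A → ℝ) : Prop :=
  ∀ ρ' : M → A → ℝ, IsAct ρ' → U μ₀ uR σ ρ' ≤ U μ₀ uR σ ρ

/-- A cheap-talk equilibrium: a profile of valid strategies that is S-BR and R-BR. -/
def CTEq (μ₀ : Ω → ℝ) (uS uR : A × Ω → ℝ) (σ : Ω → M → ℝ) (ρ : M → A → ℝ) : Prop :=
  IsMsg σ ∧ IsAct ρ ∧ SBR μ₀ uS σ ρ ∧ RBR μ₀ uR σ ρ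

/-- A persuasion profile: a profile of valid strategies that is R-BR. -/
def PersProfile (μ₀ : Ω → ℝ) (uR : A × Ω → ℝ) (σ : Ω → M → ℝ) (ρ : M → A → ℝ) : Prop :=
  IsMsg σ ∧ IsAct ρ ∧ RBR μ₀ uR σ ρ

/-- The cheap-talk payoff: the maximal Sender payoff over cheap-talk equilibria. -/
noncomputable def ctPayoff (μ₀ : Ω → ℝ) (uS uR : A × Ω → ℝ) : ℝ :=
  sSup {x | ∃ (σ : Ω → M → ℝ) (ρ : M → A → ℝ), CTEq μ₀ uS uR σ ρ ∧ x = U μ₀ uS σ ρ}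

/-- The (Bayesian) persuasion payoff: the maximal Sender payoff over persuasion profiles. -/
noncomputable def persPayoff (μ₀ : Ω → ℝ) (uS uR : A × Ω → ℝ) : ℝ :=
  sSup {x | ∃ (σ : Ω → M → ℝ) (ρ : M → A → ℝ), PersProfile μ₀ uR σ ρ ∧ x = U μ₀ uS σ ρ}

/-- A messaging strategy is partitional if it is deterministic in every state. -/
def Partitional (σ : Ω → M → ℝ) : Prop := ∀ ω, ∃ m, σ ω m = 1

/-- The partitional persuasion payoff. -/
noncomputable def partPersPayoff (μ₀ : Ω → ℝ) (uS uR : A × Ω → ℝ) : ℝ :=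
  sSup {x | ∃ (σ : Ω → M → ℝ) (ρ : M → A → ℝ),
    Partitional σ ∧ PersProfile μ₀ uR σ ρ ∧ x = U μ₀ uS σ ρ}

/-- The partitional cheap-talk payoff. -/
noncomputable def partCtPayoff (μ₀ : Ω → ℝ) (uS uR : A × Ω → ℝ) : ℝ :=
  sSup {x | ∃ (σ : Ω → M → ℝ) (ρ : M → A → ℝ),
    Partitional σ ∧ CTEq μ₀ uS uR σ ρ ∧ x = U μ₀ uS σ ρ}

/-- A message is on-path if it is sent with positive probability in some state. -/
def OnPath (σ : Ω → M → ℝ) (m : M) : Prop := ∃ ω, 0 < σ ω m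

/-- A pure action strategy: degenerate after every message. -/
def IsPureAct (ρ : M → A → ℝ) : Prop := ∀ m, ∃ a, ρ m a = 1

/-- A pure-on-path action strategy: degenerate after every on-path message. -/
def PureOnPath (σ : Ω → M → ℝ) (ρ : M → A → ℝ) : Prop :=
  ∀ m, OnPath σ m → ∃ a, ρ m a = 1

/-- The posterior belief induced by message `m`. -/
noncomputable def post (μ₀ : Ω → ℝ) (σ : Ω → M → ℝ) (m : M) (ω : Ω) : ℝ :=
  μ₀ ω * σ ω m / ∑ ω', μ₀ ω' * σ ω' m

/-- The cube of environments `[0,1]^(2|A||Ω|)`. -/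
def EnvCube (Ω A : Type) : Set ((A × Ω → ℝ) × (A × Ω → ℝ)) :=
  {e | (∀ p, e.1 p ∈ Set.Icc (0 : ℝ) 1) ∧ ∀ p, e.2 p ∈ Set.Icc (0 : ℝ) 1}

/-- The cube of transparent environments `[0,1]^(|A|(|Ω|+1))`, points `(v, u_R)`. -/
def TransCube (Ω A : Type) : Set ((A → ℝ) × (A × Ω → ℝ)) :=
  {e | (∀ a, e.1 a ∈ Set.Icc (0 : ℝ) 1) ∧ ∀ p, e.2 p ∈ Set.Icc (0 : ℝ) 1}

open Classical in
/-- The expanded-indifference matrix `T^i`: rows `u_S(a_j,·) − u_S(a_i,·)` for `j ≠ i`,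
rows `u_R(a_j,·) − u_R(a_i,·)` for `j ≠ i`, and the rows of the identity matrix. -/
noncomputable def TMat (uS uR : A × Ω → ℝ) (i : A) :
    Matrix (({j : A // j ≠ i} ⊕ {j : A // j ≠ i}) ⊕ Ω) Ω ℝ :=
  Matrix.of fun r ω =>
    match r with
    | Sum.inl (Sum.inl j) => uS (j.1, ω) - uS (i, ω)
    | Sum.inl (Sum.inr j) => uR (j.1, ω) - uR (i, ω)
    | Sum.inr ω' => if ω' = ω then 1 else 0

/-- Scant indifferences: every row-submatrix of every expanded-indifference matrix has
full rank (rank equal to the minimum of the number of rows and the number of columns). -/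
def ScantIndiff (uS uR : A × Ω → ℝ) : Prop :=
  ∀ i : A, ∀ s : Finset (({j : A // j ≠ i} ⊕ {j : A // j ≠ i}) ⊕ Ω),
    ((TMat uS uR i).submatrix (fun r : {x // x ∈ s} => r.1) id).rank
      = min s.card (Fintype.card Ω)

open Classical in
/-- The set `Ω_a` of states in which `a` is an ideal action for Sender. -/
noncomputable def idealStates (uS : A × Ω → ℝ) (a : A) : Finset Ω :=
  Finset.univ.filter fun ω => ∀ b, uS (b, ω) ≤ uS (a, ω)

/-- Felicitous environment. -/
def Felicitous (μ₀ : Ω → ℝ) (uS uR : A × Ω → ℝ) : Prop :=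
  ∀ a a' : A, 0 ≤ ∑ ω ∈ idealStates uS a, μ₀ ω * (uR (a, ω) - uR (a', ω))

/-- Partitional-unique-response: for every nonempty subset of states, Receiver's
expected payoff has a unique maximizer. -/
def PUR (μ₀ : Ω → ℝ) (uR : A × Ω → ℝ) : Prop :=
  ∀ S : Finset Ω, S.Nonempty →
    ∃! a : A, ∀ b : A, ∑ ω ∈ S, μ₀ ω * uR (b, ω) ≤ ∑ ω ∈ S, μ₀ ω * uR (a, ω)

/-- Jointly-inclusive environment: each action is the unique ideal action of both
players in some state. -/
def JointlyInclusive (uS uR : A × Ω → ℝ) : Prop :=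
  ∀ a : A, ∃ ω : Ω,
    (∀ b, b ≠ a → uS (b, ω) < uS (a, ω)) ∧ ∀ b, b ≠ a → uR (b, ω) < uR (a, ω)


section Aux
variable {Ω A M : Type} [Fintype Ω] [Fintype A] [Fintype M]

lemma U_eq (μ₀ : Ω → ℝ) (u : A × Ω → ℝ) (σ : Ω → M → ℝ) (ρ : M → A → ℝ) :
    U μ₀ u σ ρ = ∑ ω, μ₀ ω * ∑ m, σ ω m * ∑ a, ρ m a * u (a, ω) := by
  unfold U
  refine Finset.sum_congr rfl fun ω _ => ?_
  rw [Finset.mul_sum]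
  refine Finset.sum_congr rfl fun m _ => ?_
  rw [Finset.mul_sum, Finset.mul_sum]
  exact Finset.sum_congr rfl fun a _ => by ring

lemma U_eq' (μ₀ : Ω → ℝ) (u : A × Ω → ℝ) (σ : Ω → M → ℝ) (ρ : M → A → ℝ) :
    U μ₀ u σ ρ = ∑ m, ∑ a, ρ m a * ∑ ω, μ₀ ω * σ ω m * u (a, ω) := by
  unfold U
  rw [Finset.sum_comm]
  refine Finset.sum_congr rfl fun m _ => ?_
  rw [Finset.sum_comm]
  refine Finset.sum_congr rfl fun a _ => ?_
  rw [Finset.mul_sum]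
  exact Finset.sum_congr rfl fun ω _ => by ring

lemma sender_pointwise {μ₀ : Ω → ℝ} (hμpos : ∀ ω, 0 < μ₀ ω) {uS : A × Ω → ℝ}
    {σ : Ω → M → ℝ} {ρ : M → A → ℝ} (hσ : IsMsg σ) (hS : SBR μ₀ uS σ ρ) (ω : Ω) (m : M) :
    (∑ a, ρ m a * uS (a, ω)) ≤ ∑ m', σ ω m' * ∑ a, ρ m' a * uS (a, ω) := by
  classical
  set σ'' : Ω → M → ℝ := Function.update σ ω (fun m' => if m' = m then 1 else 0) with hσ''
  have hmsg : IsMsg σ'' := by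
    intro ω'
    rcases eq_or_ne ω' ω with rfl | hne
    · rw [hσ'', Function.update_self]
      exact ⟨fun x => by positivity, by simp⟩
    · rw [hσ'', Function.update_of_ne hne]
      exact hσ ω'
  have hle := hS σ'' hmsg
  rw [U_eq, U_eq] at hle
  rw [← Finset.add_sum_erase _ _ (Finset.mem_univ ω), ← Finset.add_sum_erase _ _ (Finset.mem_univ ω)] at hle
  have hsame : ∑ ω' ∈ Finset.univ.erase ω, μ₀ ω' * ∑ m', σ'' ω' m' * ∑ a, ρ m' a * uS (a, ω')
      = ∑ ω' ∈ Finset.univ.erase ω, μ₀ ω' * ∑ m', σ ω' m' * ∑ a, ρ m' a * uS (a, ω') := by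
    refine Finset.sum_congr rfl fun ω' hω' => ?_
    rw [hσ'', Function.update_of_ne (Finset.mem_erase.mp hω').1]
  rw [hsame] at hle
  have hle2 : μ₀ ω * ∑ m', σ'' ω m' * ∑ a, ρ m' a * uS (a, ω)
      ≤ μ₀ ω * ∑ m', σ ω m' * ∑ a, ρ m' a * uS (a, ω) := le_of_add_le_add_right hle
  have hle3 := le_of_mul_le_mul_left hle2 (hμpos ω)
  have hval : ∑ m', σ'' ω m' * ∑ a, ρ m' a * uS (a, ω) = ∑ a, ρ m a * uS (a, ω) := by
    rw [hσ'', Function.update_self]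
    rw [Finset.sum_eq_single m]
    · simp
    · intro m' _ hm'; simp [hm']
    · intro h; exact absurd (Finset.mem_univ m) h
  rwa [hval] at hle3

lemma receiver_pointwise {μ₀ : Ω → ℝ} {uR : A × Ω → ℝ}
    {σ : Ω → M → ℝ} {ρ : M → A → ℝ} (hρ : IsAct ρ) (hR : RBR μ₀ uR σ ρ) (m : M) (a : A) :
    (∑ ω, μ₀ ω * σ ω m * uR (a, ω)) ≤ ∑ a', ρ m a' * ∑ ω, μ₀ ω * σ ω m * uR (a', ω) := by
  classical
  set ρ'' : M → A → ℝ := Function.update ρ m (fun a' => if a' = a then 1 else 0) with hρ''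
  have hact : IsAct ρ'' := by
    intro m'
    rcases eq_or_ne m' m with rfl | hne
    · rw [hρ'', Function.update_self]
      exact ⟨fun x => by positivity, by simp⟩
    · rw [hρ'', Function.update_of_ne hne]
      exact hρ m'
  have hle := hR ρ'' hact
  rw [U_eq', U_eq'] at hle
  rw [← Finset.add_sum_erase _ _ (Finset.mem_univ m), ← Finset.add_sum_erase _ _ (Finset.mem_univ m)] at hle
  have hsame : ∑ m' ∈ Finset.univ.erase m, ∑ a', ρ'' m' a' * ∑ ω, μ₀ ω * σ ω m' * uR (a', ω)
      = ∑ m' ∈ Finset.univ.erase m, ∑ a', ρ m' a' * ∑ ω, μ₀ ω * σ ω m' * uR (a', ω) := by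
    refine Finset.sum_congr rfl fun m' hm' => ?_
    rw [hρ'', Function.update_of_ne (Finset.mem_erase.mp hm').1]
  rw [hsame] at hle
  have hle2 : ∑ a', ρ'' m a' * ∑ ω, μ₀ ω * σ ω m * uR (a', ω)
      ≤ ∑ a', ρ m a' * ∑ ω, μ₀ ω * σ ω m * uR (a', ω) := le_of_add_le_add_right hle
  have hval : ∑ a', ρ'' m a' * ∑ ω, μ₀ ω * σ ω m * uR (a', ω)
      = ∑ ω, μ₀ ω * σ ω m * uR (a, ω) := by
    rw [hρ'', Function.update_self]
    rw [Finset.sum_eq_single a]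
    · simp
    · intro a' _ ha'; simp [ha']
    · intro h; exact absurd (Finset.mem_univ a) h
  rwa [hval] at hle2

lemma uS_inj_of_scant [Nonempty Ω] {uS uR : A × Ω → ℝ} (hscant : ScantIndiff uS uR)
    (ω₀ : Ω) {a b : A} (hab : a ≠ b) : uS (a, ω₀) ≠ uS (b, ω₀) := by
  classical
  intro h
  set R := ({j : A // j ≠ b} ⊕ {j : A // j ≠ b}) ⊕ Ω
  set r₀ : R := Sum.inl (Sum.inl ⟨a, hab⟩)
  set s : Finset R := insert r₀ ((Finset.univ.erase ω₀).image Sum.inr) with hs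
  have hnotmem : r₀ ∉ (Finset.univ.erase ω₀).image Sum.inr := by
    simp [r₀]
  have hcard : s.card = Fintype.card Ω := by
    rw [hs, Finset.card_insert_of_notMem hnotmem,
      Finset.card_image_of_injective _ Sum.inr_injective,
      Finset.card_erase_of_mem (Finset.mem_univ _), Finset.card_univ]
    have : 0 < Fintype.card Ω := Fintype.card_pos
    omega
  have hrank := hscant b s
  rw [hcard, min_self] at hrank
  -- every row of the submatrix vanishes at ω₀
  set N := (TMat uS uR b).submatrix (fun r : {x // x ∈ s} => r.1) id with hN
  have hzero : ∀ r : {x // x ∈ s}, N r ω₀ = 0 := by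
    rintro ⟨r, hr⟩
    rw [hs, Finset.mem_insert] at hr
    rcases hr with hr | hr
    · subst hr
      simp [hN, TMat, r₀, h]
    · rw [Finset.mem_image] at hr
      obtain ⟨ω', hω', rfl⟩ := hr
      have : ω' ≠ ω₀ := (Finset.mem_erase.mp hω').1
      simp [hN, TMat, this]
  -- hence the range of Nᵀ.mulVecLin lies in the kernel of evaluation at ω₀
  have hle : LinearMap.range (N.transpose.mulVecLin) ≤
      LinearMap.ker (LinearMap.proj ω₀ : (Ω → ℝ) →ₗ[ℝ] ℝ) := by
    rintro x ⟨c, rfl⟩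
    simp only [LinearMap.mem_ker, LinearMap.proj_apply, Matrix.mulVecLin_apply,
      Matrix.mulVec, dotProduct, Matrix.transpose_apply]
    exact Finset.sum_eq_zero fun r _ => by rw [hzero r, zero_mul]
  have hproper : (LinearMap.ker (LinearMap.proj ω₀ : (Ω → ℝ) →ₗ[ℝ] ℝ)) < ⊤ := by
    rw [lt_top_iff_ne_top]
    intro htop
    have : (fun ω => if ω = ω₀ then (1:ℝ) else 0) ∈
        LinearMap.ker (LinearMap.proj ω₀ : (Ω → ℝ) →ₗ[ℝ] ℝ) := htop ▸ Submodule.mem_top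
    simp [LinearMap.mem_ker] at this
  have hlt : N.rank < Fintype.card Ω := by
    rw [← Matrix.rank_transpose, Matrix.rank]
    calc Module.finrank ℝ (LinearMap.range (N.transpose.mulVecLin))
        ≤ Module.finrank ℝ (LinearMap.ker (LinearMap.proj ω₀ : (Ω → ℝ) →ₗ[ℝ] ℝ)) :=
          Submodule.finrank_mono hle
      _ < Module.finrank ℝ (Ω → ℝ) := Submodule.finrank_lt hproper.ne
      _ = Fintype.card Ω := by simp
  omega


end Aux

/-- Lemma 6 (Kamenica–Lin): in a scant-indifferences environment, a pure-on-path
cheap-talk equilibrium attaining the persuasion payoff can be replaced by a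
partitional, pure cheap-talk equilibrium with at most `|A|` on-path messages that
also attains the persuasion payoff. -/
theorem sender_need_not_mix
    (Ω A M : Type) [Fintype Ω] [Fintype A] [Fintype M]
    [Nonempty Ω] [Nonempty A]
    (hM : max (Fintype.card Ω) (Fintype.card A) < Fintype.card M)
    (μ₀ : Ω → ℝ) (hμ : IsPrior μ₀)
    (uS uR : A × Ω → ℝ)
    (huS : ∀ p, uS p ∈ Set.Icc (0 : ℝ) 1) (huR : ∀ p, uR p ∈ Set.Icc (0 : ℝ) 1)
    (hscant : ScantIndiff uS uR)
    (σ : Ω → M → ℝ) (ρ : M → A → ℝ)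
    (heq : CTEq μ₀ uS uR σ ρ)
    (hopt : U μ₀ uS σ ρ = persPayoff (M := M) μ₀ uS uR)
    (hpure : PureOnPath σ ρ) :
    ∃ (σ' : Ω → M → ℝ) (ρ' : M → A → ℝ),
      Partitional σ' ∧ IsPureAct ρ' ∧
      Set.ncard {m : M | OnPath σ' m} ≤ Fintype.card A ∧
      CTEq μ₀ uS uR σ' ρ' ∧
      U μ₀ uS σ' ρ' = persPayoff (M := M) μ₀ uS uR := by
  classical
  obtain ⟨hσ, hρ, hS, hR⟩ := heq
  obtain ⟨hμpos, hμsum⟩ := hμ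
  -- the pure action after each on-path message
  set aOf : M → A := fun m => if h : ∃ a, ρ m a = 1 then h.choose else Classical.arbitrary A
    with haOfdef
  have haOf : ∀ m, OnPath σ m → ρ m (aOf m) = 1 := by
    intro m hm
    have h : ∃ a, ρ m a = 1 := hpure m hm
    rw [haOfdef]; simp only [dif_pos h]; exact h.choose_spec
  have haOf0 : ∀ m, OnPath σ m → ∀ a, a ≠ aOf m → ρ m a = 0 := by
    intro m hm a ha
    have hsum := (hρ m).2
    rw [← Finset.add_sum_erase _ _ (Finset.mem_univ (aOf m)), haOf m hm] at hsum
    have h0 : ∑ a' ∈ Finset.univ.erase (aOf m), ρ m a' = 0 := by linarith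
    have := (Finset.sum_eq_zero_iff_of_nonneg (fun a' _ => (hρ m).1 a')).mp h0
    exact this a (Finset.mem_erase.mpr ⟨ha, Finset.mem_univ a⟩)
  have hρsum : ∀ m, OnPath σ m → ∀ f : A → ℝ, ∑ a, ρ m a * f a = f (aOf m) := by
    intro m hm f
    rw [Finset.sum_eq_single (aOf m)]
    · rw [haOf m hm, one_mul]
    · intro a _ ha; rw [haOf0 m hm a ha, zero_mul]
    · intro h; exact absurd (Finset.mem_univ _) h
  -- every state has some on-path message
  have hmex : ∀ ω, ∃ m, 0 < σ ω m := by
    intro ω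
    by_contra hc
    push_neg at hc
    have : ∑ m, σ ω m ≤ 0 := Finset.sum_nonpos fun m _ => hc m
    rw [(hσ ω).2] at this; linarith
  choose mOf hmOf using hmex
  have honp : ∀ ω, OnPath σ (mOf ω) := fun ω => ⟨ω, hmOf ω⟩
  set α : Ω → A := fun ω => aOf (mOf ω) with hαdef
  -- sender's value
  have hL1 : ∀ ω m, (∑ a, ρ m a * uS (a, ω)) ≤ ∑ m', σ ω m' * ∑ a, ρ m' a * uS (a, ω) :=
    fun ω m => sender_pointwise hμpos hσ hS ω m
  have hL3 : ∀ ω m, 0 < σ ω m →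
      (∑ a, ρ m a * uS (a, ω)) = ∑ m', σ ω m' * ∑ a, ρ m' a * uS (a, ω) := by
    intro ω m hpos
    set V := ∑ m', σ ω m' * ∑ a, ρ m' a * uS (a, ω) with hVdef
    have hzero : ∑ m', σ ω m' * (V - ∑ a, ρ m' a * uS (a, ω)) = 0 := by
      simp only [mul_sub, Finset.sum_sub_distrib, ← Finset.sum_mul, (hσ ω).2, one_mul]
      rw [← hVdef, sub_self]
    have hterm := (Finset.sum_eq_zero_iff_of_nonneg (fun m' _ =>
      mul_nonneg ((hσ ω).1 m') (sub_nonneg.mpr (hL1 ω m')))).mp hzero m (Finset.mem_univ m)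
    rcases mul_eq_zero.mp hterm with h | h
    · exact absurd h (ne_of_gt hpos)
    · linarith [sub_eq_zero.mp h]
  -- value of sender in state ω is uS (α ω, ω)
  have hWon : ∀ ω m, OnPath σ m → (∑ a, ρ m a * uS (a, ω)) = uS (aOf m, ω) :=
    fun ω m hm => hρsum m hm _
  have hV : ∀ ω, (∑ m', σ ω m' * ∑ a, ρ m' a * uS (a, ω)) = uS (α ω, ω) := by
    intro ω
    rw [← hL3 ω (mOf ω) (hmOf ω), hWon ω (mOf ω) (honp ω)]
  -- injectivity of sender utility in each state
  have hinj : ∀ (ω : Ω) (a b : A), uS (a, ω) = uS (b, ω) → a = b := by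
    intro ω a b h
    by_contra hab
    exact uS_inj_of_scant hscant ω hab h
  -- every on-path message from ω induces action α ω
  have hα : ∀ ω m, 0 < σ ω m → aOf m = α ω := by
    intro ω m hpos
    refine hinj ω _ _ ?_
    rw [← hWon ω m ⟨ω, hpos⟩, hL3 ω m hpos, hV ω]
  -- key sender bound
  have hF2 : ∀ ω ω', uS (α ω', ω) ≤ uS (α ω, ω) := by
    intro ω ω'
    have h1 : uS (α ω', ω) = ∑ a, ρ (mOf ω') a * uS (a, ω) := (hWon ω (mOf ω') (honp ω')).symm
    rw [h1, ← hV ω]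
    exact hL1 ω (mOf ω')
  -- the embedding of actions into messages
  obtain ⟨ι⟩ : Nonempty (A ↪ M) :=
    Function.Embedding.nonempty_of_card_le (le_of_lt (lt_of_le_of_lt (le_max_right _ _) hM))
  set σ' : Ω → M → ℝ := fun ω m => if m = ι (α ω) then 1 else 0 with hσ'def
  set g : M → A := fun m => if h : ∃ ω, ι (α ω) = m then α h.choose
    else α (Classical.arbitrary Ω) with hgdef
  set ρ' : M → A → ℝ := fun m a => if a = g m then 1 else 0 with hρ'def
  have hg : ∀ ω, g (ι (α ω)) = α ω := by
    intro ω
    have h : ∃ ω', ι (α ω') = ι (α ω) := ⟨ω, rfl⟩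
    rw [hgdef]; simp only [dif_pos h]
    exact ι.injective h.choose_spec
  have hgr : ∀ m, ∃ ω', g m = α ω' := by
    intro m
    rw [hgdef]
    by_cases h : ∃ ω, ι (α ω) = m
    · simp only [dif_pos h]; exact ⟨h.choose, rfl⟩
    · simp only [dif_neg h]; exact ⟨Classical.arbitrary Ω, rfl⟩
  have hMsg' : IsMsg σ' := by
    intro ω
    constructor
    · intro m; rw [hσ'def]; positivity
    · rw [hσ'def]; simp
  have hAct' : IsAct ρ' := by
    intro m
    constructor
    · intro a; rw [hρ'def]; positivity
    · rw [hρ'def]; simp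
  have hPart : Partitional σ' := fun ω => ⟨ι (α ω), by rw [hσ'def]; simp⟩
  have hPure' : IsPureAct ρ' := fun m => ⟨g m, by rw [hρ'def]; simp⟩
  -- evaluation of sums against the point masses
  have hρ'sum : ∀ m (f : A → ℝ), ∑ a, ρ' m a * f a = f (g m) := by
    intro m f
    rw [hρ'def]
    rw [Finset.sum_eq_single (g m)]
    · simp
    · intro a _ ha; simp [ha]
    · intro h; exact absurd (Finset.mem_univ _) h
  have hσ'sum : ∀ ω (f : M → ℝ), ∑ m, σ' ω m * f m = f (ι (α ω)) := by
    intro ω f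
    rw [hσ'def]
    rw [Finset.sum_eq_single (ι (α ω))]
    · simp
    · intro m _ hm; simp [hm]
    · intro h; exact absurd (Finset.mem_univ _) h
  -- payoff of the new profile
  have hUnew : ∀ u : A × Ω → ℝ, U μ₀ u σ' ρ' = ∑ ω, μ₀ ω * u (α ω, ω) := by
    intro u
    rw [U_eq]
    refine Finset.sum_congr rfl fun ω _ => ?_
    rw [hσ'sum ω (fun m => ∑ a, ρ' m a * u (a, ω)), hρ'sum _ (fun a => u (a, ω)), hg]
  have hUold : U μ₀ uS σ ρ = ∑ ω, μ₀ ω * uS (α ω, ω) := by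
    rw [U_eq]
    exact Finset.sum_congr rfl fun ω _ => by rw [hV ω]
  have hpay : U μ₀ uS σ' ρ' = U μ₀ uS σ ρ := by rw [hUnew, hUold]
  -- sender best response for the new profile
  have hSBR' : SBR μ₀ uS σ' ρ' := by
    intro σ'' hσ''
    rw [U_eq, hUnew]
    refine Finset.sum_le_sum fun ω _ => ?_
    refine mul_le_mul_of_nonneg_left ?_ (le_of_lt (hμpos ω))
    calc ∑ m, σ'' ω m * ∑ a, ρ' m a * uS (a, ω)
        = ∑ m, σ'' ω m * uS (g m, ω) := by
          refine Finset.sum_congr rfl fun m _ => ?_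
          rw [hρ'sum m (fun a => uS (a, ω))]
      _ ≤ ∑ m, σ'' ω m * uS (α ω, ω) := by
          refine Finset.sum_le_sum fun m _ => ?_
          refine mul_le_mul_of_nonneg_left ?_ ((hσ'' ω).1 m)
          obtain ⟨ω', hω'⟩ := hgr m
          rw [hω']; exact hF2 ω ω'
      _ = uS (α ω, ω) := by rw [← Finset.sum_mul, (hσ'' ω).2, one_mul]
  -- receiver best response for the new profile
  have hRBR' : RBR μ₀ uR σ' ρ' := by
    have hL2 : ∀ m a, (∑ ω, μ₀ ω * σ ω m * uR (a, ω))
        ≤ ∑ a', ρ m a' * ∑ ω, μ₀ ω * σ ω m * uR (a', ω) :=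
      fun m a => receiver_pointwise hρ hR m a
    set Sb : A → Finset M := fun b => Finset.univ.filter (fun m => OnPath σ m ∧ aOf m = b)
      with hSbdef
    have hSb : ∀ b ω, ∑ m ∈ Sb b, σ ω m = if α ω = b then 1 else 0 := by
      intro b ω
      by_cases h : α ω = b
      · rw [if_pos h, ← (hσ ω).2]
        apply Finset.sum_subset (Finset.subset_univ _)
        intro m _ hm
        by_contra hne
        have hpos : 0 < σ ω m := lt_of_le_of_ne ((hσ ω).1 m) (Ne.symm hne)
        refine hm ?_
        rw [hSbdef]
        exact Finset.mem_filter.mpr ⟨Finset.mem_univ m, ⟨ω, hpos⟩, (hα ω m hpos).trans h⟩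
      · rw [if_neg h]
        refine Finset.sum_eq_zero fun m hm => ?_
        rw [hSbdef] at hm
        obtain ⟨-, honm, hao⟩ := Finset.mem_filter.mp hm
        by_contra hne
        have hpos : 0 < σ ω m := lt_of_le_of_ne ((hσ ω).1 m) (Ne.symm hne)
        exact h ((hα ω m hpos).symm.trans hao)
    have hflip : ∀ b (a' : A), ∑ m ∈ Sb b, ∑ ω, μ₀ ω * σ ω m * uR (a', ω)
        = ∑ ω, if α ω = b then μ₀ ω * uR (a', ω) else 0 := by
      intro b a'
      calc ∑ m ∈ Sb b, ∑ ω, μ₀ ω * σ ω m * uR (a', ω)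
          = ∑ ω, ∑ m ∈ Sb b, μ₀ ω * σ ω m * uR (a', ω) := Finset.sum_comm
        _ = ∑ ω, (∑ m ∈ Sb b, σ ω m) * (μ₀ ω * uR (a', ω)) := by
            refine Finset.sum_congr rfl fun ω _ => ?_
            rw [Finset.sum_mul]
            exact Finset.sum_congr rfl fun m _ => by ring
        _ = ∑ ω, if α ω = b then μ₀ ω * uR (a', ω) else 0 := by
            refine Finset.sum_congr rfl fun ω _ => ?_
            rw [hSb b ω]
            by_cases h : α ω = b <;> simp [h]
    have hK : ∀ b a, (∑ ω, if α ω = b then μ₀ ω * uR (a, ω) else 0)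
        ≤ ∑ ω, if α ω = b then μ₀ ω * uR (b, ω) else 0 := by
      intro b a
      rw [← hflip b a, ← hflip b b]
      calc ∑ m ∈ Sb b, ∑ ω, μ₀ ω * σ ω m * uR (a, ω)
          ≤ ∑ m ∈ Sb b, ∑ a', ρ m a' * ∑ ω, μ₀ ω * σ ω m * uR (a', ω) :=
            Finset.sum_le_sum fun m _ => hL2 m a
        _ = ∑ m ∈ Sb b, ∑ ω, μ₀ ω * σ ω m * uR (b, ω) := by
            refine Finset.sum_congr rfl fun m hm => ?_
            rw [hSbdef] at hm
            obtain ⟨-, honm, hao⟩ := Finset.mem_filter.mp hm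
            rw [hρsum m honm (fun a' => ∑ ω, μ₀ ω * σ ω m * uR (a', ω)), hao]
    have hgroup : ∀ G : Ω → ℝ, ∑ ω, G ω = ∑ b, ∑ ω, if α ω = b then G ω else 0 := by
      intro G
      rw [Finset.sum_comm]
      refine Finset.sum_congr rfl fun ω _ => ?_
      simp
    intro ρ'' hρ''
    rw [U_eq, hUnew]
    have hLHS : ∀ ω, μ₀ ω * ∑ m, σ' ω m * ∑ a, ρ'' m a * uR (a, ω)
        = μ₀ ω * ∑ a, ρ'' (ι (α ω)) a * uR (a, ω) := fun ω => by
      rw [hσ'sum ω (fun m => ∑ a, ρ'' m a * uR (a, ω))]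
    calc ∑ ω, μ₀ ω * ∑ m, σ' ω m * ∑ a, ρ'' m a * uR (a, ω)
        = ∑ ω, μ₀ ω * ∑ a, ρ'' (ι (α ω)) a * uR (a, ω) :=
          Finset.sum_congr rfl fun ω _ => hLHS ω
      _ = ∑ b, ∑ a, ρ'' (ι b) a * ∑ ω, if α ω = b then μ₀ ω * uR (a, ω) else 0 := by
          rw [hgroup (fun ω => μ₀ ω * ∑ a, ρ'' (ι (α ω)) a * uR (a, ω))]
          refine Finset.sum_congr rfl fun b _ => ?_
          have hpush : ∀ a : A, ρ'' (ι b) a * (∑ ω, if α ω = b then μ₀ ω * uR (a, ω) else 0)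
              = ∑ ω, ρ'' (ι b) a * (if α ω = b then μ₀ ω * uR (a, ω) else 0) :=
            fun a => Finset.mul_sum _ _ _
          rw [Finset.sum_congr rfl (fun a _ => hpush a), Finset.sum_comm]
          refine Finset.sum_congr rfl fun ω _ => ?_
          by_cases h : α ω = b
          · rw [if_pos h, h, Finset.mul_sum]
            exact Finset.sum_congr rfl fun a _ => by rw [if_pos rfl]; ring
          · simp [h]
      _ ≤ ∑ b, ∑ a, ρ'' (ι b) a * ∑ ω, if α ω = b then μ₀ ω * uR (b, ω) else 0 := by
          refine Finset.sum_le_sum fun b _ => Finset.sum_le_sum fun a _ => ?_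
          exact mul_le_mul_of_nonneg_left (hK b a) ((hρ'' (ι b)).1 a)
      _ = ∑ b, ∑ ω, if α ω = b then μ₀ ω * uR (b, ω) else 0 := by
          refine Finset.sum_congr rfl fun b _ => ?_
          rw [← Finset.sum_mul, (hρ'' (ι b)).2, one_mul]
      _ = ∑ b, ∑ ω, if α ω = b then μ₀ ω * uR (α ω, ω) else 0 := by
          refine Finset.sum_congr rfl fun b _ => Finset.sum_congr rfl fun ω _ => ?_
          by_cases h : α ω = b
          · rw [if_pos h, if_pos h, h]
          · rw [if_neg h, if_neg h]
      _ = ∑ ω, μ₀ ω * uR (α ω, ω) := (hgroup (fun ω => μ₀ ω * uR (α ω, ω))).symm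
  -- the on-path messages of σ'
  have hncard : Set.ncard {m : M | OnPath σ' m} ≤ Fintype.card A := by
    have hsub : {m : M | OnPath σ' m} ⊆ ↑(Finset.univ.image ι) := by
      rintro m ⟨ω, hpos⟩
      rw [hσ'def] at hpos
      simp only [Finset.coe_image, Set.mem_image]
      by_cases h : m = ι (α ω)
      · exact ⟨α ω, by simp, h.symm⟩
      · simp [h] at hpos
    calc Set.ncard {m : M | OnPath σ' m} ≤ Set.ncard ↑(Finset.univ.image ι) :=
          Set.ncard_le_ncard hsub (Finset.finite_toSet _)
      _ = (Finset.univ.image ι).card := Set.ncard_coe_finset _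
      _ ≤ (Finset.univ : Finset A).card := Finset.card_image_le
      _ = Fintype.card A := Finset.card_univ
  exact ⟨σ', ρ', hPart, hPure', hncard, ⟨hMsg', hAct', hSBR', hRBR'⟩, by rw [hpay, hopt]⟩

end KL
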